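/- (Lemma 3.) Let P and Q be random real M×M matrices and let v and w be random vectors in ℝ^M, defined on a common probability space, such that the pair (v, w) is independent of the pair (P, Q), and all entries of the products below are integrable. Then ‖E[P v wᵀ Q]‖_F ≤ ‖E[v wᵀ]‖_F · ‖E[vec(P) vec(Q)ᵀ]‖_F. -/

import Mathlib

open MeasureTheory ProbabilityTheory Matrix Filter

/-- Measurable-space structure on matrices (entrywise). -/
instance matrixMeasurableSpace {m n α : Type*} [MeasurableSpace α] :
    MeasurableSpace (Matrix m n α) := MeasurableSpace.pi (X := fun _ : m => n → α)

/-- The Euclidean norm of a vector. -/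
noncomputable def euclNorm {ι : Type*} [Fintype ι] (v : ι → ℝ) : ℝ :=
  Real.sqrt (∑ i, (v i) ^ 2)

/-- The Frobenius norm of a matrix. -/
noncomputable def frobNorm {ι κ : Type*} [Fintype ι] [Fintype κ] (F : Matrix ι κ ℝ) : ℝ :=
  Real.sqrt (∑ i, ∑ j, (F i j) ^ 2)

/-- Entrywise expectation of a random vector. -/
noncomputable def Evec {Ω' : Type*} [MeasurableSpace Ω'] (P : Measure Ω') {ι : Type*}
    (F : Ω' → ι → ℝ) : ι → ℝ := fun i => ∫ ω, F ω i ∂P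

/-- Entrywise expectation of a random matrix. -/
noncomputable def Emat {Ω' : Type*} [MeasurableSpace Ω'] (P : Measure Ω') {ι κ : Type*}
    (F : Ω' → Matrix ι κ ℝ) : Matrix ι κ ℝ := Matrix.of fun i j => ∫ ω, F ω i j ∂P

/-- Entrywise integrability of a random vector. -/
def IntV {Ω' : Type*} [MeasurableSpace Ω'] (P : Measure Ω') {ι : Type*}
    (F : Ω' → ι → ℝ) : Prop := ∀ i, Integrable (fun ω => F ω i) P

/-- Entrywise integrability of a random matrix. -/
def IntM {Ω' : Type*} [MeasurableSpace Ω'] (P : Measure Ω') {ι κ : Type*}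
    (F : Ω' → Matrix ι κ ℝ) : Prop := ∀ i j, Integrable (fun ω => F ω i j) P

/-- `vec(P) vec(Q)ᵀ`, with `vec` stacking the columns of a square matrix. -/
def vecOuter {M : ℕ} (P Q : Matrix (Fin M) (Fin M) ℝ) :
    Matrix (Fin M × Fin M) (Fin M × Fin M) ℝ :=
  Matrix.of fun p q => P p.1 p.2 * Q q.1 q.2

/-- `vec(P) vᵀ` for a square matrix `P` and a vector `v`. -/
def vecOuterVec {M : ℕ} (P : Matrix (Fin M) (Fin M) ℝ) (v : Fin M → ℝ) :
    Matrix (Fin M × Fin M) (Fin M) ℝ :=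
  Matrix.of fun p i => P p.1 p.2 * v i

/-- Lemma 3: if the pair `(v, w)` is independent of the pair `(P, Q)` and the
relevant products are integrable, then
`‖E[P v wᵀ Q]‖_F ≤ ‖E[v wᵀ]‖_F ‖E[vec(P) vec(Q)ᵀ]‖_F`. -/
theorem lemma3_independence_bound
    {M : ℕ} {Ω' : Type} [MeasurableSpace Ω'] (Pr : Measure Ω') [IsProbabilityMeasure Pr]
    (P Q : Ω' → Matrix (Fin M) (Fin M) ℝ) (v w : Ω' → Fin M → ℝ)
    (hindep : IndepFun (fun ω => (v ω, w ω)) (fun ω => (P ω, Q ω)) Pr)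
    (hint1 : IntM Pr (fun ω => P ω * vecMulVec (v ω) (w ω) * Q ω))
    (hint2 : IntM Pr (fun ω => vecMulVec (v ω) (w ω)))
    (hint3 : IntM Pr (fun ω => vecOuter (P ω) (Q ω))) :
    frobNorm (Emat Pr (fun ω => P ω * vecMulVec (v ω) (w ω) * Q ω)) ≤
      frobNorm (Emat Pr (fun ω => vecMulVec (v ω) (w ω))) *
        frobNorm (Emat Pr (fun ω => vecOuter (P ω) (Q ω))) := by
  classical
  set A := Emat Pr (fun ω => P ω * vecMulVec (v ω) (w ω) * Q ω) with hA
  set S := Emat Pr (fun ω => vecMulVec (v ω) (w ω)) with hSdef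
  set T := Emat Pr (fun ω => vecOuter (P ω) (Q ω)) with hTdef
  -- independence of entries
  have hind : ∀ (k l i j : Fin M),
      IndepFun (fun ω => v ω k * w ω l) (fun ω => P ω i k * Q ω l j) Pr := by
    intro k l i j
    have hφ : Measurable (fun x : (Fin M → ℝ) × (Fin M → ℝ) => x.1 k * x.2 l) :=
      ((measurable_pi_apply k).comp measurable_fst).mul
        ((measurable_pi_apply l).comp measurable_snd)
    have hψ : Measurable (fun x : Matrix (Fin M) (Fin M) ℝ × Matrix (Fin M) (Fin M) ℝ =>
        x.1 i k * x.2 l j) :=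
      Measurable.mul (f := fun x : Matrix (Fin M) (Fin M) ℝ × Matrix (Fin M) (Fin M) ℝ => x.1 i k)
        (g := fun x : Matrix (Fin M) (Fin M) ℝ × Matrix (Fin M) (Fin M) ℝ => x.2 l j)
        ((measurable_pi_apply k).comp ((measurable_pi_apply i).comp measurable_fst))
        ((measurable_pi_apply j).comp ((measurable_pi_apply l).comp measurable_snd))
    exact hindep.comp hφ hψ
  have hIvw : ∀ k l : Fin M, Integrable (fun ω => v ω k * w ω l) Pr := by
    intro k l; simpa [vecMulVec] using hint2 k l
  have hIPQ : ∀ i k l j : Fin M, Integrable (fun ω => P ω i k * Q ω l j) Pr := by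
    intro i k l j; simpa [vecOuter] using hint3 (i, k) (l, j)
  -- entry formula
  have hentry : ∀ i j : Fin M,
      A i j = ∑ p : Fin M × Fin M, S p.1 p.2 * T (i, p.1) (p.2, j) := by
    intro i j
    have hInt : ∀ p : Fin M × Fin M,
        Integrable (fun ω => (v ω p.1 * w ω p.2) * (P ω i p.1 * Q ω p.2 j)) Pr := by
      intro p
      exact (hind p.1 p.2 i j).integrable_mul (hIvw p.1 p.2) (hIPQ i p.1 p.2 j)
    have hfun : ∀ ω, (P ω * vecMulVec (v ω) (w ω) * Q ω) i j =
        ∑ p : Fin M × Fin M, (v ω p.1 * w ω p.2) * (P ω i p.1 * Q ω p.2 j) := by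
      intro ω
      rw [Fintype.sum_prod_type_right]
      simp only [Matrix.mul_apply, vecMulVec_apply, Finset.sum_mul]
      refine Finset.sum_congr rfl fun k _ => Finset.sum_congr rfl fun l _ => ?_
      ring
    calc A i j = ∫ ω, (P ω * vecMulVec (v ω) (w ω) * Q ω) i j ∂Pr := rfl
      _ = ∫ ω, ∑ p : Fin M × Fin M, (v ω p.1 * w ω p.2) * (P ω i p.1 * Q ω p.2 j) ∂Pr := by
          simp_rw [hfun]
      _ = ∑ p : Fin M × Fin M, ∫ ω, (v ω p.1 * w ω p.2) * (P ω i p.1 * Q ω p.2 j) ∂Pr :=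
          integral_finset_sum _ (fun p _ => hInt p)
      _ = ∑ p : Fin M × Fin M, S p.1 p.2 * T (i, p.1) (p.2, j) := by
          refine Finset.sum_congr rfl fun p _ => ?_
          have := ProbabilityTheory.IndepFun.integral_mul_eq_mul_integral (hind p.1 p.2 i j)
            (hIvw p.1 p.2).aestronglyMeasurable (hIPQ i p.1 p.2 j).aestronglyMeasurable
          simp only [Pi.mul_apply] at this
          rw [show (∫ ω, (v ω p.1 * w ω p.2) * (P ω i p.1 * Q ω p.2 j) ∂Pr) =
            (∫ ω, v ω p.1 * w ω p.2 ∂Pr) * ∫ ω, P ω i p.1 * Q ω p.2 j ∂Pr from this]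
          simp [hSdef, hTdef, Emat, vecMulVec, vecOuter]
  -- Cauchy-Schwarz for each entry, then sum
  have key : ∑ i, ∑ j, (A i j) ^ 2 ≤
      (∑ k, ∑ l, (S k l) ^ 2) * (∑ p, ∑ q, (T p q) ^ 2) := by
    have h1 : ∀ i j : Fin M, (A i j) ^ 2 ≤
        (∑ k, ∑ l, (S k l) ^ 2) * (∑ p : Fin M × Fin M, (T (i, p.1) (p.2, j)) ^ 2) := by
      intro i j
      rw [hentry i j]
      have := Finset.sum_mul_sq_le_sq_mul_sq Finset.univ
        (fun p : Fin M × Fin M => S p.1 p.2) (fun p => T (i, p.1) (p.2, j))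
      simpa [Fintype.sum_prod_type] using this
    calc ∑ i, ∑ j, (A i j) ^ 2
        ≤ ∑ i, ∑ j, (∑ k, ∑ l, (S k l) ^ 2) *
            (∑ p : Fin M × Fin M, (T (i, p.1) (p.2, j)) ^ 2) :=
          Finset.sum_le_sum fun i _ => Finset.sum_le_sum fun j _ => h1 i j
      _ = (∑ k, ∑ l, (S k l) ^ 2) *
            (∑ i, ∑ j, ∑ p : Fin M × Fin M, (T (i, p.1) (p.2, j)) ^ 2) := by
          simp_rw [← Finset.mul_sum]
      _ = (∑ k, ∑ l, (S k l) ^ 2) * (∑ p, ∑ q, (T p q) ^ 2) := by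
          congr 1
          simp_rw [Fintype.sum_prod_type]
          refine Finset.sum_congr rfl fun i _ => ?_
          rw [Finset.sum_comm]
          exact Finset.sum_congr rfl fun k _ => Finset.sum_comm
  -- conclude with sqrt
  have hSnn : 0 ≤ ∑ k, ∑ l, (S k l) ^ 2 :=
    Finset.sum_nonneg fun _ _ => Finset.sum_nonneg fun _ _ => sq_nonneg _
  rw [show frobNorm A = Real.sqrt (∑ i, ∑ j, (A i j) ^ 2) from rfl]
  calc Real.sqrt (∑ i, ∑ j, (A i j) ^ 2)
      ≤ Real.sqrt ((∑ k, ∑ l, (S k l) ^ 2) * (∑ p, ∑ q, (T p q) ^ 2)) :=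
        Real.sqrt_le_sqrt key
    _ = frobNorm S * frobNorm T := by
        rw [Real.sqrt_mul hSnn]; rfl
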